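/- Let A ∈ ℝ^{N×N} be symmetric with vᵀAv ≥ η‖v‖² for all v and some η > 0, let D ∈ ℝ^{N×M}, g ∈ ℝ^N, and suppose u ∈ ℝ^M satisfies Dᵀg + DᵀA D u = 0. Then η‖D u‖ ≤ ‖g‖. -/

import Mathlib

open Matrix

noncomputable def toEuc {n : ℕ} (v : Fin n → ℝ) : EuclideanSpace ℝ (Fin n) :=
  (WithLp.equiv 2 (Fin n → ℝ)).symm v

theorem stmt18 (N M : ℕ) (A : Matrix (Fin N) (Fin N) ℝ) (hsymm : A.IsSymm)
    (η : ℝ) (hη : 0 < η)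
    (hcoer : ∀ v : Fin N → ℝ, η * ‖toEuc v‖ ^ 2 ≤ v ⬝ᵥ A.mulVec v)
    (D : Matrix (Fin N) (Fin M) ℝ) (g : Fin N → ℝ) (u : Fin M → ℝ)
    (hnormal : Dᵀ.mulVec g + (Dᵀ * A * D).mulVec u = 0) :
    η * ‖toEuc (D.mulVec u)‖ ≤ ‖toEuc g‖ := by
  set w := D.mulVec u with hw
  -- dot hnormal with u
  have hdot : u ⬝ᵥ (Dᵀ.mulVec g) + u ⬝ᵥ ((Dᵀ * A * D).mulVec u) = 0 := by
    have := congrArg (fun v => u ⬝ᵥ v) hnormal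
    simpa [dotProduct_add] using this
  have h1 : u ⬝ᵥ (Dᵀ.mulVec g) = w ⬝ᵥ g := by
    rw [Matrix.dotProduct_mulVec, Matrix.vecMul_transpose]
  have h2 : u ⬝ᵥ ((Dᵀ * A * D).mulVec u) = w ⬝ᵥ A.mulVec w := by
    rw [← Matrix.mulVec_mulVec, ← Matrix.mulVec_mulVec, Matrix.dotProduct_mulVec,
      Matrix.vecMul_transpose]
  have hkey : w ⬝ᵥ A.mulVec w = -(w ⬝ᵥ g) := by
    rw [h1, h2] at hdot; linarith
  -- Cauchy-Schwarz
  have hinner : w ⬝ᵥ g = inner ℝ (toEuc w) (toEuc g) := by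
    simp [toEuc, dotProduct, EuclideanSpace.inner_eq_star_dotProduct, dotProduct,
      mul_comm]
  have hcs : -(w ⬝ᵥ g) ≤ ‖toEuc w‖ * ‖toEuc g‖ := by
    have := abs_real_inner_le_norm (toEuc w) (toEuc g)
    rw [hinner]
    calc -(inner ℝ (toEuc w) (toEuc g) : ℝ) ≤ |(inner ℝ (toEuc w) (toEuc g) : ℝ)| :=
          neg_le_abs _
      _ ≤ ‖toEuc w‖ * ‖toEuc g‖ := this
  have hmain : η * ‖toEuc w‖ ^ 2 ≤ ‖toEuc w‖ * ‖toEuc g‖ := by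
    calc η * ‖toEuc w‖ ^ 2 ≤ w ⬝ᵥ A.mulVec w := hcoer w
      _ = -(w ⬝ᵥ g) := hkey
      _ ≤ ‖toEuc w‖ * ‖toEuc g‖ := hcs
  rcases eq_or_lt_of_le (norm_nonneg (toEuc w)) with h0 | h0
  · rw [← h0, mul_zero]; exact norm_nonneg _
  · nlinarith [norm_nonneg (toEuc g)]
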